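/- Let f = √2·χ_{[0]}, where χ_{[0]} is the indicator function of the cylinder [0] of sequences starting with the symbol 0. Then |Kf − f|_∞ = √2 > 1, while ‖[D, π(M_f)]‖ = 1. (In particular, the converse of the implication '|Kf − f|_∞ ≤ 1 ⇒ ‖[D, π(M_f)]‖ ≤ 1' fails.) -/

import Mathlib

open MeasureTheory ContinuousLinearMap
open scoped RealInnerProductSpace InnerProductSpace ENNReal

noncomputable section

/-- The shift space `Ω = {0,1}^ℕ`, with `false` playing the role of the symbol `0`
and `true` of the symbol `1`. -/
abbrev Ω : Type := ℕ → Bool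

/-- The shift map `σ`, `σ(x)ₙ = x_{n+1}`. -/
def shiftMap : Ω → Ω := fun x n => x (n + 1)

/-- Prepending a symbol: `consSeq a x = ax`. -/
def consSeq (a : Bool) (x : Ω) : Ω := fun n => Nat.casesOn n a (fun k => x k)

/-- The cylinder set `[w]` of sequences beginning with the finite word `w`. -/
def cylinder (w : List Bool) : Set Ω := {x | ∀ i : Fin w.length, x (i : ℕ) = w.get i}

/-- The Hilbert space `L²(μ)` (real). -/
abbrev E (μ : Measure Ω) := Lp (α := Ω) ℝ 2 μ

/-- The Hilbert space `H = L²(μ) × L²(μ)` with the norm `√(‖φ‖² + ‖ψ‖²)`. -/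
abbrev HS (μ : Measure Ω) := WithLp 2 (E μ × E μ)

variable {μ : Measure Ω}

/-- The diagonal block operator `(φ, ψ) ↦ (A₁φ, A₂ψ)` on `H`. -/
def blockDiag (A₁ A₂ : E μ →L[ℝ] E μ) : HS μ →L[ℝ] HS μ :=
  ((WithLp.prodContinuousLinearEquiv 2 ℝ (E μ) (E μ)).symm.toContinuousLinearMap).comp
    (((A₁.comp (ContinuousLinearMap.fst ℝ (E μ) (E μ))).prod
        (A₂.comp (ContinuousLinearMap.snd ℝ (E μ) (E μ)))).comp
      (WithLp.prodContinuousLinearEquiv 2 ℝ (E μ) (E μ)).toContinuousLinearMap)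

/-- The antidiagonal block operator `(φ, ψ) ↦ (A₁ψ, A₂φ)` on `H`. -/
def blockAntidiag (A₁ A₂ : E μ →L[ℝ] E μ) : HS μ →L[ℝ] HS μ :=
  ((WithLp.prodContinuousLinearEquiv 2 ℝ (E μ) (E μ)).symm.toContinuousLinearMap).comp
    (((A₁.comp (ContinuousLinearMap.snd ℝ (E μ) (E μ))).prod
        (A₂.comp (ContinuousLinearMap.fst ℝ (E μ) (E μ)))).comp
      (WithLp.prodContinuousLinearEquiv 2 ℝ (E μ) (E μ)).toContinuousLinearMap)

/-- The diagonal representation `π(A)(φ,ψ) = (Aφ, Aψ)`. -/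
def diagRep (A : E μ →L[ℝ] E μ) : HS μ →L[ℝ] HS μ := blockDiag A A

/-- The Dirac operator `D(φ,ψ) = (Kψ, Lφ)` associated with the pair `(K, L)`. -/
def dirac (K L : E μ →L[ℝ] E μ) : HS μ →L[ℝ] HS μ := blockAntidiag K L

/-- The commutator `[D, π(A)]`. -/
def commD (K L A : E μ →L[ℝ] E μ) : HS μ →L[ℝ] HS μ :=
  (dirac K L).comp (diagRep A) - (diagRep A).comp (dirac K L)

/-- The rank-one orthogonal projection onto the span of the unit vector `ψ`:
`φ ↦ ⟪ψ, φ⟫ • ψ`. -/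
def rankOneProj (ψ : E μ) : E μ →L[ℝ] E μ := (innerSL ℝ ψ).smulRight ψ

/-- The Haar-basis element `e_w = 2^{ℓ(w)/2} (χ_{[w1]} - χ_{[w0]})`, as a function on `Ω`. -/
def haarFun (w : List Bool) : Ω → ℝ := fun x =>
  (2 : ℝ) ^ ((w.length : ℝ) / 2) *
    ((cylinder (w ++ [true])).indicator 1 x - (cylinder (w ++ [false])).indicator 1 x)

lemma continuous_shiftMap : Continuous shiftMap :=
  continuous_pi fun n => continuous_apply (n + 1)

lemma continuous_consSeq (a : Bool) : Continuous (consSeq a) := by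
  apply continuous_pi
  intro n
  cases n with
  | zero => exact continuous_const
  | succ k => exact continuous_apply k

/-- The Koopman operator on continuous functions: `f ↦ f ∘ σ`. -/
def koopmanC (f : C(Ω, ℝ)) : C(Ω, ℝ) := f.comp ⟨shiftMap, continuous_shiftMap⟩

/-- The Ruelle operator on continuous functions: `(Lf)(x) = (f(0x) + f(1x))/2`. -/
def ruelleC (f : C(Ω, ℝ)) : C(Ω, ℝ) :=
  ⟨fun x => (f (consSeq false x) + f (consSeq true x)) / 2,
    ((f.continuous.comp (continuous_consSeq false)).add
      (f.continuous.comp (continuous_consSeq true))).div_const 2⟩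

end
section

/-- The continuous function `f = √2 · χ_{[0]}`. -/
noncomputable def sqrtTwoChi : C(Ω, ℝ) :=
  ⟨fun x => Real.sqrt 2 * (cylinder [false]).indicator 1 x, by
    have h : (fun x : Ω => Real.sqrt 2 * (cylinder [false]).indicator 1 x)
        = fun x : Ω => (fun b : Bool => if b = false then Real.sqrt 2 else 0) (x 0) := by
      funext x
      by_cases hx : x 0 = false
      · have hmem : x ∈ cylinder [false] := by
          intro i
          fin_cases i
          simpa using hx
        simp [Set.indicator_of_mem hmem, hx]
      · have hmem : x ∉ cylinder [false] := by
          intro hmem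
          exact hx (by simpa using hmem ⟨0, by norm_num⟩)
        simp [Set.indicator_of_notMem hmem, hx]
    rw [h]
    exact Continuous.comp (continuous_of_discreteTopology (f := fun b : Bool => if b = false then Real.sqrt 2 else 0)) (continuous_apply 0)⟩

end

noncomputable section Aux
open Set MeasureTheory

lemma cylinder_nil : _root_.cylinder [] = Set.univ := by
  ext x; simp [_root_.cylinder]

lemma cylinder_cons (a : Bool) (w : List Bool) :
    _root_.cylinder (a :: w) = {x : Ω | x 0 = a} ∩ shiftMap ⁻¹' _root_.cylinder w := by
  ext x
  constructor
  · intro h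
    refine ⟨h ⟨0, by simp⟩, fun i => ?_⟩
    simpa [shiftMap] using h i.succ
  · rintro ⟨h0, h1⟩ i
    rcases i with ⟨i, hi⟩
    cases i with
    | zero => simpa using h0
    | succ k =>
      have := h1 ⟨k, by simpa using hi⟩
      simpa [shiftMap] using this

lemma mem_cylinder_single (b : Bool) (x : Ω) : x ∈ _root_.cylinder [b] ↔ x 0 = b := by
  rw [cylinder_cons, cylinder_nil]; simp

lemma measurableSet_eval (n : ℕ) (b : Bool) : MeasurableSet {x : Ω | x n = b} := by
  show MeasurableSet ((fun x : Ω => x n) ⁻¹' {b})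
  exact (measurable_pi_apply n) (measurableSet_singleton b)

lemma measurable_shiftMap : Measurable shiftMap := by
  apply measurable_pi_lambda
  intro n; exact measurable_pi_apply _

lemma measurableSet_cylinder (w : List Bool) : MeasurableSet (_root_.cylinder w) := by
  induction w with
  | nil => rw [cylinder_nil]; exact MeasurableSet.univ
  | cons a w ih =>
    rw [cylinder_cons]
    exact (measurableSet_eval 0 a).inter (measurable_shiftMap ih)

lemma shift_preimage_cylinder (w : List Bool) :
    shiftMap ⁻¹' _root_.cylinder w = _root_.cylinder (false :: w) ∪ _root_.cylinder (true :: w) := by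
  rw [cylinder_cons, cylinder_cons]
  ext x
  rcases Bool.dichotomy (x 0) with h | h <;> simp [h]

/-- cylinders as a collection of sets -/
def cylSets : Set (Set Ω) := Set.range _root_.cylinder

lemma inter_cylinder (w w' : List Bool) :
    (_root_.cylinder w ∩ _root_.cylinder w').Nonempty →
      ∃ v : List Bool, _root_.cylinder w ∩ _root_.cylinder w' = _root_.cylinder v := by
  induction w generalizing w' with
  | nil => intro _; exact ⟨w', by rw [cylinder_nil, Set.univ_inter]⟩
  | cons a t ih =>
    intro hne
    cases w' with
    | nil => exact ⟨a :: t, by rw [cylinder_nil, Set.inter_univ]⟩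
    | cons a' t' =>
      obtain ⟨x, hx, hx'⟩ := hne
      rw [cylinder_cons] at hx hx'
      have haa : a = a' := by rw [← hx.1, hx'.1]
      subst haa
      have hne' : (_root_.cylinder t ∩ _root_.cylinder t').Nonempty :=
        ⟨shiftMap x, hx.2, hx'.2⟩
      obtain ⟨v, hv⟩ := ih t' hne'
      refine ⟨a :: v, ?_⟩
      rw [cylinder_cons, cylinder_cons, cylinder_cons, ← hv]
      ext y
      simp only [Set.mem_inter_iff, Set.mem_preimage, Set.mem_setOf_eq]
      tauto

lemma isPiSystem_cylSets : IsPiSystem cylSets := by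
  rintro _ ⟨w, rfl⟩ _ ⟨w', rfl⟩ hne
  obtain ⟨v, hv⟩ := inter_cylinder w w' hne
  exact ⟨v, hv.symm⟩

lemma generateFrom_cylSets : (inferInstance : MeasurableSpace Ω) = MeasurableSpace.generateFrom cylSets := by
  apply le_antisymm
  · -- pi ≤ generateFrom
    have hev : ∀ n b, MeasurableSet[MeasurableSpace.generateFrom cylSets] {x : Ω | x n = b} := by
      intro n
      induction n with
      | zero =>
        intro b
        have : {x : Ω | x 0 = b} = _root_.cylinder [b] := by
          ext x; rw [mem_cylinder_single]; rfl
        rw [this]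
        exact MeasurableSpace.measurableSet_generateFrom ⟨[b], rfl⟩
      | succ n ihn =>
        intro b
        have hσ : @Measurable Ω Ω (MeasurableSpace.generateFrom cylSets)
            (MeasurableSpace.generateFrom cylSets) shiftMap := by
          apply @measurable_generateFrom Ω Ω (MeasurableSpace.generateFrom cylSets) cylSets shiftMap
          rintro _ ⟨w, rfl⟩
          rw [shift_preimage_cylinder]
          have h1 : MeasurableSet[MeasurableSpace.generateFrom cylSets]
              (_root_.cylinder (false :: w)) :=
            MeasurableSpace.measurableSet_generateFrom ⟨false :: w, rfl⟩
          have h2 : MeasurableSet[MeasurableSpace.generateFrom cylSets]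
              (_root_.cylinder (true :: w)) :=
            MeasurableSpace.measurableSet_generateFrom ⟨true :: w, rfl⟩
          exact h1.union h2
        have : {x : Ω | x (n+1) = b} = shiftMap ⁻¹' {x : Ω | x n = b} := rfl
        rw [this]
        exact hσ (ihn b)
    rw [show (inferInstance : MeasurableSpace Ω) = MeasurableSpace.pi from rfl]
    apply iSup_le
    intro n
    rw [← measurable_iff_comap_le]
    intro s _
    rw [← Set.biUnion_preimage_singleton]
    exact MeasurableSet.biUnion (Set.to_countable s) (fun b _ => hev n b)
  · apply MeasurableSpace.generateFrom_le
    rintro _ ⟨w, rfl⟩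
    exact measurableSet_cylinder w

lemma measure_ext_cyl (μ₁ μ₂ : Measure Ω) [IsFiniteMeasure μ₁] [IsFiniteMeasure μ₂]
    (h : ∀ w : List Bool, μ₁ (_root_.cylinder w) = μ₂ (_root_.cylinder w)) : μ₁ = μ₂ := by
  apply MeasureTheory.ext_of_generate_finite cylSets generateFrom_cylSets isPiSystem_cylSets
  · rintro _ ⟨w, rfl⟩; exact h w
  · have := h []
    rwa [cylinder_nil] at this

section MeasureFacts
variable (μ : Measure Ω) [IsProbabilityMeasure μ]
variable (hμ : ∀ w : List Bool, μ (_root_.cylinder w) = (1 / 2) ^ w.length)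

instance mapShiftFinite (ν : Measure Ω) [IsFiniteMeasure ν] : IsFiniteMeasure (ν.map shiftMap) :=
  ⟨by rw [Measure.map_apply measurable_shiftMap MeasurableSet.univ]; simp [measure_lt_top]⟩

include hμ in
lemma map_shift_restrict (b : Bool) :
    (μ.restrict {x : Ω | x 0 = b}).map shiftMap = (2⁻¹ : ℝ≥0∞) • μ := by
  haveI : IsFiniteMeasure ((2⁻¹ : ℝ≥0∞) • μ) :=
    ⟨by rw [Measure.smul_apply, smul_eq_mul]
        exact ENNReal.mul_lt_top (by norm_num) (measure_lt_top μ _)⟩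
  apply measure_ext_cyl
  intro w
  rw [Measure.map_apply measurable_shiftMap (measurableSet_cylinder w),
    Measure.restrict_apply (measurable_shiftMap (measurableSet_cylinder w))]
  have : shiftMap ⁻¹' _root_.cylinder w ∩ {x : Ω | x 0 = b} = _root_.cylinder (b :: w) := by
    rw [cylinder_cons, Set.inter_comm]
  rw [this, hμ, Measure.smul_apply, hμ, smul_eq_mul]
  simp only [List.length_cons, pow_succ, one_div]
  ring

include hμ in
lemma shift_measurePreserving : MeasurePreserving shiftMap μ μ := by
  refine ⟨measurable_shiftMap, ?_⟩
  have hsplit : μ = μ.restrict {x : Ω | x 0 = false} + μ.restrict {x : Ω | x 0 = false}ᶜ :=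
    (Measure.restrict_add_restrict_compl (measurableSet_eval 0 false)).symm
  have hcompl : {x : Ω | x 0 = false}ᶜ = {x : Ω | x 0 = true} := by
    ext x; simp
  calc μ.map shiftMap
      = (μ.restrict {x : Ω | x 0 = false}).map shiftMap
        + (μ.restrict {x : Ω | x 0 = true}).map shiftMap := by
        conv_lhs => rw [hsplit, hcompl]
        exact Measure.map_add _ _ measurable_shiftMap
    _ = (2⁻¹ : ℝ≥0∞) • μ + (2⁻¹ : ℝ≥0∞) • μ := by
        rw [map_shift_restrict μ hμ false, map_shift_restrict μ hμ true]
    _ = μ := by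
        rw [← add_smul, ENNReal.inv_two_add_inv_two, one_smul]

include hμ in
lemma integral_indicator_shift (b : Bool) (G : Ω → ℝ) (hG : AEStronglyMeasurable G μ) :
    ∫ x, Set.indicator {x : Ω | x 0 = b} (fun x => G (shiftMap x)) x ∂μ
      = (2⁻¹ : ℝ) * ∫ y, G y ∂μ := by
  rw [MeasureTheory.integral_indicator (measurableSet_eval 0 b)]
  have hmap := map_shift_restrict μ hμ b
  have hG' : AEStronglyMeasurable G ((μ.restrict {x : Ω | x 0 = b}).map shiftMap) := by
    rw [hmap]
    exact AEStronglyMeasurable.mono_ac (Measure.AbsolutelyContinuous.rfl.smul_left _) hG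
  have := MeasureTheory.integral_map (f := G)
    (measurable_shiftMap.aemeasurable (μ := μ.restrict {x : Ω | x 0 = b})) hG'
  rw [← this, hmap, integral_smul_measure]
  norm_num
end MeasureFacts

section Analysis
open MeasureTheory

lemma sqrtTwoChi_apply (x : Ω) :
    sqrtTwoChi x = if x 0 = false then Real.sqrt 2 else 0 := by
  show Real.sqrt 2 * (_root_.cylinder [false]).indicator 1 x = _
  by_cases h : x 0 = false
  · rw [Set.indicator_of_mem ((mem_cylinder_single false x).2 h)]
    simp [h]
  · rw [Set.indicator_of_notMem (fun hm => h ((mem_cylinder_single false x).1 hm))]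
    simp [h]

/-- `H b g = χ_{y₀=b} g²` -/
def Hb (b : Bool) (g : Ω → ℝ) : Ω → ℝ := Set.indicator {y : Ω | y 0 = b} (fun y => g y ^ 2)

lemma pointwise_sq (g : Ω → ℝ) (x : Ω) :
    ((sqrtTwoChi (shiftMap x) - sqrtTwoChi x) * g (shiftMap x)) ^ 2
      = Set.indicator {x : Ω | x 0 = true} (fun x => Hb false g (shiftMap x)) x * 2
        + Set.indicator {x : Ω | x 0 = false} (fun x => Hb true g (shiftMap x)) x * 2 := by
  have hs : shiftMap x 0 = x 1 := rfl
  have h2 : Real.sqrt 2 ^ 2 = 2 := Real.sq_sqrt (by norm_num)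
  rcases Bool.dichotomy (x 0) with h0 | h0 <;> rcases Bool.dichotomy (x 1) with h1 | h1 <;>
    simp [Hb, Set.indicator_apply, sqrtTwoChi_apply, hs, h0, h1, mul_pow, h2] <;> ring

lemma Hb_add (g : Ω → ℝ) (y : Ω) : Hb false g y + Hb true g y = g y ^ 2 := by
  rcases Bool.dichotomy (y 0) with h | h <;> simp [Hb, Set.indicator_apply, h]

variable (μ : Measure Ω) [IsProbabilityMeasure μ]

lemma key_integral (hμ : ∀ w : List Bool, μ (_root_.cylinder w) = (1 / 2) ^ w.length)
    (g : Ω → ℝ) (hg : AEStronglyMeasurable g μ)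
    (hg2 : Integrable (fun x => g x ^ 2) μ) :
    ∫ x, ((sqrtTwoChi (shiftMap x) - sqrtTwoChi x) * g (shiftMap x)) ^ 2 ∂μ
      = ∫ x, g x ^ 2 ∂μ := by
  have hmp := shift_measurePreserving μ hμ
  have hgsq : AEStronglyMeasurable (fun y => g y ^ 2) μ := by
    exact (hg.mul hg).congr (Filter.Eventually.of_forall fun y => by simp [sq])
  have hHaesm : ∀ b, AEStronglyMeasurable (Hb b g) μ := fun b =>
    hgsq.indicator (measurableSet_eval 0 b)
  have hHint : ∀ b, Integrable (Hb b g) μ := fun b =>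
    hg2.indicator (measurableSet_eval 0 b)
  have hHcomp : ∀ b, Integrable (fun x => Hb b g (shiftMap x)) μ := by
    intro b
    have := (hmp.integrable_comp (hHaesm b)).2 (hHint b)
    exact this
  have hpiece : ∀ b b', Integrable
      (fun x => Set.indicator {x : Ω | x 0 = b} (fun x => Hb b' g (shiftMap x)) x * 2) μ :=
    fun b b' => ((hHcomp b').indicator (measurableSet_eval 0 b)).mul_const 2
  calc ∫ x, ((sqrtTwoChi (shiftMap x) - sqrtTwoChi x) * g (shiftMap x)) ^ 2 ∂μ
      = ∫ x, (Set.indicator {x : Ω | x 0 = true} (fun x => Hb false g (shiftMap x)) x * 2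
          + Set.indicator {x : Ω | x 0 = false} (fun x => Hb true g (shiftMap x)) x * 2) ∂μ := by
        exact integral_congr_ae (Filter.Eventually.of_forall (pointwise_sq g))
    _ = (∫ x, Set.indicator {x : Ω | x 0 = true} (fun x => Hb false g (shiftMap x)) x ∂μ) * 2
          + (∫ x, Set.indicator {x : Ω | x 0 = false} (fun x => Hb true g (shiftMap x)) x ∂μ) * 2 := by
        rw [integral_add (hpiece true false) (hpiece false true),
          integral_mul_const, integral_mul_const]
    _ = (∫ y, Hb false g y ∂μ) + (∫ y, Hb true g y ∂μ) := by
        rw [integral_indicator_shift μ hμ true (Hb false g) (hHaesm false),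
          integral_indicator_shift μ hμ false (Hb true g) (hHaesm true)]
        ring
    _ = ∫ x, g x ^ 2 ∂μ := by
        rw [← integral_add (hHint false) (hHint true)]
        exact integral_congr_ae (Filter.Eventually.of_forall (fun y => Hb_add g y))

end Analysis

section OperatorFacts
open MeasureTheory
variable {μ : Measure Ω} [IsProbabilityMeasure μ]

lemma Emu_integrable_sq (g : E μ) : Integrable (fun x => (g : Ω → ℝ) x ^ 2) μ := by
  have := MeasureTheory.L2.integrable_inner (𝕜 := ℝ) g g
  simpa [RCLike.inner_apply, sq] using this

lemma Emu_norm_sq_eq (g : E μ) : ‖g‖ ^ 2 = ∫ x, (g : Ω → ℝ) x ^ 2 ∂μ := by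
  rw [← real_inner_self_eq_norm_sq, MeasureTheory.L2.inner_def]
  congr 1
  funext x
  simp [RCLike.inner_apply, sq]

variable (K Mf : E μ →L[ℝ] E μ)

lemma B1_ae (hμ : ∀ w : List Bool, μ (_root_.cylinder w) = (1 / 2) ^ w.length)
    (hK : ∀ g : E μ, (K g : Ω → ℝ) =ᵐ[μ] fun x => g (shiftMap x))
    (hMf : ∀ g : E μ, (Mf g : Ω → ℝ) =ᵐ[μ] fun x => sqrtTwoChi x * g x) (g : E μ) :
    ((K.comp Mf - Mf.comp K) g : Ω → ℝ) =ᵐ[μ]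
      fun x => (sqrtTwoChi (shiftMap x) - sqrtTwoChi x) * (g : Ω → ℝ) (shiftMap x) := by
  have hmp := shift_measurePreserving μ hμ
  have h1 : ((K.comp Mf - Mf.comp K) g : Ω → ℝ) =ᵐ[μ]
      fun x => (K (Mf g) : Ω → ℝ) x - (Mf (K g) : Ω → ℝ) x := by
    have := MeasureTheory.Lp.coeFn_sub ((K.comp Mf) g) ((Mf.comp K) g)
    exact this
  have h2 := hK (Mf g)
  have h3 : (fun x => (Mf g : Ω → ℝ) (shiftMap x)) =ᵐ[μ]
      fun x => sqrtTwoChi (shiftMap x) * (g : Ω → ℝ) (shiftMap x) := by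
    have := (hmp.quasiMeasurePreserving).ae_eq_comp (hMf g)
    exact this
  have h4 := hMf (K g)
  have h5 := hK g
  filter_upwards [h1, h2, h3, h4, h5] with x e1 e2 e3 e4 e5
  rw [e1, e2, e3, e4, e5]
  ring

lemma B1_isometry (hμ : ∀ w : List Bool, μ (_root_.cylinder w) = (1 / 2) ^ w.length)
    (hK : ∀ g : E μ, (K g : Ω → ℝ) =ᵐ[μ] fun x => g (shiftMap x))
    (hMf : ∀ g : E μ, (Mf g : Ω → ℝ) =ᵐ[μ] fun x => sqrtTwoChi x * g x) (g : E μ) :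
    ‖(K.comp Mf - Mf.comp K) g‖ = ‖g‖ := by
  have hsq : ‖(K.comp Mf - Mf.comp K) g‖ ^ 2 = ‖g‖ ^ 2 := by
    rw [Emu_norm_sq_eq, Emu_norm_sq_eq]
    have hcongr : ∫ x, ((K.comp Mf - Mf.comp K) g : Ω → ℝ) x ^ 2 ∂μ
        = ∫ x, ((sqrtTwoChi (shiftMap x) - sqrtTwoChi x) * (g : Ω → ℝ) (shiftMap x)) ^ 2 ∂μ := by
      apply integral_congr_ae
      filter_upwards [B1_ae K Mf hμ hK hMf g] with x hx
      rw [hx]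
    rw [hcongr]
    exact key_integral μ hμ (g : Ω → ℝ) (MeasureTheory.Lp.aestronglyMeasurable g)
      (Emu_integrable_sq g)
  have := congrArg Real.sqrt hsq
  rwa [Real.sqrt_sq (norm_nonneg _), Real.sqrt_sq (norm_nonneg _)] at this

end OperatorFacts

section OpAlg
open MeasureTheory ContinuousLinearMap
open scoped RealInnerProductSpace
variable {μ : Measure Ω} [IsProbabilityMeasure μ]

lemma Mf_selfadjoint (Mf : E μ →L[ℝ] E μ)
    (hMf : ∀ g : E μ, (Mf g : Ω → ℝ) =ᵐ[μ] fun x => sqrtTwoChi x * g x) :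
    ContinuousLinearMap.adjoint Mf = Mf := by
  have : Mf = ContinuousLinearMap.adjoint Mf := by
    rw [ContinuousLinearMap.eq_adjoint_iff]
    intro x y
    rw [MeasureTheory.L2.inner_def, MeasureTheory.L2.inner_def]
    apply integral_congr_ae
    filter_upwards [hMf x, hMf y] with a e1 e2
    simp only [RCLike.inner_apply, conj_trivial, e1, e2]
    ring
  exact this.symm

lemma commD_eq_blocks (K L Mf : E μ →L[ℝ] E μ) :
    commD K L Mf = blockAntidiag (K.comp Mf - Mf.comp K) (L.comp Mf - Mf.comp L) := by
  apply ContinuousLinearMap.ext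
  intro x
  rfl

end OpAlg

section BlockNorm
open MeasureTheory ContinuousLinearMap
variable {μ : Measure Ω} [IsProbabilityMeasure μ]

lemma blockAntidiag_norm_one (B₁ B₂ : E μ →L[ℝ] E μ)
    (h1 : ∀ g, ‖B₁ g‖ = ‖g‖) (h2 : ∀ g, ‖B₂ g‖ ≤ ‖g‖) (ψ : E μ) (hψ : ‖ψ‖ = 1) :
    ‖blockAntidiag B₁ B₂‖ = 1 := by
  apply le_antisymm
  · apply ContinuousLinearMap.opNorm_le_bound _ zero_le_one
    intro x
    rw [one_mul]
    have hx : ‖blockAntidiag B₁ B₂ x‖ ^ 2 ≤ ‖x‖ ^ 2 := by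
      rw [WithLp.prod_norm_sq_eq_of_L2, WithLp.prod_norm_sq_eq_of_L2]
      have e1 : (blockAntidiag B₁ B₂ x).fst = B₁ x.snd := rfl
      have e2 : (blockAntidiag B₁ B₂ x).snd = B₂ x.fst := rfl
      rw [e1, e2, h1]
      have h2' := h2 x.fst
      nlinarith [norm_nonneg (B₂ x.fst), norm_nonneg x.fst]
    calc ‖blockAntidiag B₁ B₂ x‖ = Real.sqrt (‖blockAntidiag B₁ B₂ x‖ ^ 2) :=
          (Real.sqrt_sq (norm_nonneg _)).symm
      _ ≤ Real.sqrt (‖x‖ ^ 2) := Real.sqrt_le_sqrt hx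
      _ = ‖x‖ := Real.sqrt_sq (norm_nonneg _)
  · set x₀ : HS μ := (WithLp.equiv 2 (E μ × E μ)).symm (0, ψ) with hx₀
    have hT : blockAntidiag B₁ B₂ x₀ = (WithLp.equiv 2 (E μ × E μ)).symm (B₁ ψ, 0) := by
      have : blockAntidiag B₁ B₂ x₀ = (WithLp.equiv 2 (E μ × E μ)).symm (B₁ ψ, B₂ 0) := rfl
      rw [this, map_zero]
    have hnx₀ : ‖x₀‖ = 1 := by
      rw [hx₀, WithLp.equiv_symm_apply, WithLp.norm_toLp_snd, hψ]
    have hnT : ‖blockAntidiag B₁ B₂ x₀‖ = 1 := by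
      rw [hT, WithLp.equiv_symm_apply, WithLp.norm_toLp_fst, h1, hψ]
    calc (1 : ℝ) = ‖blockAntidiag B₁ B₂ x₀‖ := hnT.symm
      _ ≤ ‖blockAntidiag B₁ B₂‖ := ContinuousLinearMap.unit_le_opNorm _ _ (le_of_eq hnx₀)

/-- the constant-one unit vector in `E μ` -/
def psi0 (μ : Measure Ω) [IsProbabilityMeasure μ] : E μ :=
  MeasureTheory.indicatorConstLp 2 MeasurableSet.univ (measure_ne_top μ _) (1 : ℝ)

lemma psi0_norm : ‖psi0 μ‖ = 1 := by
  rw [psi0, MeasureTheory.norm_indicatorConstLp (by norm_num) (by norm_num)]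
  simp

end BlockNorm

/-- For `f = √2 χ_{[0]}` one has `|Kf − f|_∞ = √2 > 1` while `‖[D, π(M_f)]‖ = 1`:
the converse of `|Kf − f|_∞ ≤ 1 ⇒ ‖[D, π(M_f)]‖ ≤ 1` fails. -/
theorem stmt17
    (μ : Measure Ω) [IsProbabilityMeasure μ]
    (hμ : ∀ w : List Bool, μ (cylinder w) = (1 / 2) ^ w.length)
    (K L : E μ →L[ℝ] E μ)
    (hK : ∀ g : E μ, (K g : Ω → ℝ) =ᵐ[μ] fun x => g (shiftMap x))
    (hL : ∀ g : E μ, (L g : Ω → ℝ) =ᵐ[μ]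
      fun x => (g (consSeq false x) + g (consSeq true x)) / 2)
    (hadj : ContinuousLinearMap.adjoint K = L)
    (Mf : E μ →L[ℝ] E μ)
    (hMf : ∀ g : E μ, (Mf g : Ω → ℝ) =ᵐ[μ] fun x => sqrtTwoChi x * g x) :
    ‖koopmanC sqrtTwoChi - sqrtTwoChi‖ = Real.sqrt 2 ∧
    (1 : ℝ) < Real.sqrt 2 ∧
    ‖commD K L Mf‖ = 1 := by
  have hB1iso := B1_isometry K Mf hμ hK hMf
  have hMfsa := Mf_selfadjoint Mf hMf
  have hadjB1 : ContinuousLinearMap.adjoint (K.comp Mf - Mf.comp K)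
      = -(L.comp Mf - Mf.comp L) := by
    rw [map_sub, ContinuousLinearMap.adjoint_comp, ContinuousLinearMap.adjoint_comp,
      hadj, hMfsa]
    exact (neg_sub _ _).symm
  have hB1norm : ‖K.comp Mf - Mf.comp K‖ = 1 := by
    apply le_antisymm
    · exact ContinuousLinearMap.opNorm_le_bound _ zero_le_one
        (fun g => by rw [one_mul, hB1iso g])
    · calc (1 : ℝ) = ‖(K.comp Mf - Mf.comp K) (psi0 μ)‖ := by rw [hB1iso, psi0_norm]
        _ ≤ ‖K.comp Mf - Mf.comp K‖ :=
          ContinuousLinearMap.unit_le_opNorm _ _ (le_of_eq psi0_norm)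
  have hB2norm : ‖L.comp Mf - Mf.comp L‖ = 1 := by
    have h1 : ‖L.comp Mf - Mf.comp L‖
        = ‖ContinuousLinearMap.adjoint (K.comp Mf - Mf.comp K)‖ := by
      rw [hadjB1, norm_neg]
    rw [h1, LinearIsometryEquiv.norm_map ContinuousLinearMap.adjoint]
    exact hB1norm
  refine ⟨?_, ?_, ?_⟩
  · -- sup norm
    have hval : ∀ x : Ω, (koopmanC sqrtTwoChi - sqrtTwoChi) x
        = sqrtTwoChi (shiftMap x) - sqrtTwoChi x := fun x => rfl
    apply le_antisymm
    · rw [ContinuousMap.norm_le _ (Real.sqrt_nonneg 2)]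
      intro x
      rw [hval, Real.norm_eq_abs]
      have hs : shiftMap x 0 = x 1 := rfl
      rcases Bool.dichotomy (x 0) with h0 | h0 <;> rcases Bool.dichotomy (x 1) with h1 | h1 <;>
        simp [sqrtTwoChi_apply, hs, h0, h1, abs_of_nonneg, Real.sqrt_nonneg]
    · set x₀ : Ω := fun n => decide (n = 0) with hx₀def
      have h0 : x₀ 0 = true := rfl
      have h1 : shiftMap x₀ 0 = false := rfl
      have hvx : (koopmanC sqrtTwoChi - sqrtTwoChi) x₀ = Real.sqrt 2 := by
        rw [hval, sqrtTwoChi_apply, sqrtTwoChi_apply, h0, h1]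
        norm_num
      calc Real.sqrt 2 = ‖(koopmanC sqrtTwoChi - sqrtTwoChi) x₀‖ := by
            rw [hvx, Real.norm_eq_abs, abs_of_nonneg (Real.sqrt_nonneg 2)]
        _ ≤ ‖koopmanC sqrtTwoChi - sqrtTwoChi‖ := ContinuousMap.norm_coe_le_norm _ x₀
  · rw [show (1 : ℝ) = Real.sqrt 1 by simp]
    exact Real.sqrt_lt_sqrt zero_le_one one_lt_two
  · rw [commD_eq_blocks]
    apply blockAntidiag_norm_one _ _ hB1iso
      (fun g => by
        calc ‖(L.comp Mf - Mf.comp L) g‖ ≤ ‖L.comp Mf - Mf.comp L‖ * ‖g‖ :=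
              ContinuousLinearMap.le_opNorm _ _
          _ = ‖g‖ := by rw [hB2norm, one_mul])
      (psi0 μ) psi0_norm
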